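/- For every tuple A ∈ B_n one has the inclusions σ_re(D_n) ⊆ σ_re(T_n^d(A)) ⊆ ⋃_{k=1}^n σ_re(D_k). -/

import Mathlib

open Cardinal

noncomputable section

namespace OperatorMatrix

variable {Y : Type*} [SeminormedAddCommGroup Y] [NormedSpace ℂ Y]

/-- `α(T)`: the nullity of `T`, i.e. the dimension of its kernel. -/
def nullity (T : Y →L[ℂ] Y) : Cardinal := Module.rank ℂ (LinearMap.ker (T : Y →ₗ[ℂ] Y))

/-- `β(T)`: the deficiency of `T`, i.e. the dimension of `Y / R(T)`. -/
def deficiency (T : Y →L[ℂ] Y) : Cardinal := Module.rank ℂ (Y ⧸ LinearMap.range (T : Y →ₗ[ℂ] Y))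

/-- `T` is left Fredholm: `α(T) < ∞` and `R(T)` is closed. -/
def LeftFredholm (T : Y →L[ℂ] Y) : Prop :=
  nullity T < ℵ₀ ∧ IsClosed (LinearMap.range (T : Y →ₗ[ℂ] Y) : Set Y)

/-- `T` is right Fredholm: `β(T) < ∞`. -/
def RightFredholm (T : Y →L[ℂ] Y) : Prop := deficiency T < ℵ₀

/-- `T` is Fredholm: both left and right Fredholm. -/
def Fredholm (T : Y →L[ℂ] Y) : Prop := LeftFredholm T ∧ RightFredholm T

/-- `T` is left Weyl: left Fredholm with `ind T = α(T) - β(T) ≤ 0`. -/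
def LeftWeyl (T : Y →L[ℂ] Y) : Prop := LeftFredholm T ∧ nullity T ≤ deficiency T

/-- `T` is right Weyl: right Fredholm with `ind T = α(T) - β(T) ≥ 0`. -/
def RightWeyl (T : Y →L[ℂ] Y) : Prop := RightFredholm T ∧ deficiency T ≤ nullity T

/-- The left essential spectrum. -/
def sigmaLe (T : Y →L[ℂ] Y) : Set ℂ := {lam | ¬ LeftFredholm (T - lam • 1)}

/-- The right essential spectrum. -/
def sigmaRe (T : Y →L[ℂ] Y) : Set ℂ := {lam | ¬ RightFredholm (T - lam • 1)}

/-- The essential spectrum. -/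
def sigmaE (T : Y →L[ℂ] Y) : Set ℂ := {lam | ¬ Fredholm (T - lam • 1)}

/-- The left Weyl spectrum. -/
def sigmaLw (T : Y →L[ℂ] Y) : Set ℂ := {lam | ¬ LeftWeyl (T - lam • 1)}

/-- The right Weyl spectrum. -/
def sigmaRw (T : Y →L[ℂ] Y) : Set ℂ := {lam | ¬ RightWeyl (T - lam • 1)}

/-- The complements condition: `N(T)` is complemented (by a closed subspace), and `R(T)` is
closed and complemented (by a closed subspace). -/
def ComplementsCondition (T : Y →L[ℂ] Y) : Prop :=
  (∃ q : Submodule ℂ Y, IsClosed (q : Set Y) ∧ IsCompl (LinearMap.ker (T : Y →ₗ[ℂ] Y)) q) ∧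
    IsClosed (LinearMap.range (T : Y →ₗ[ℂ] Y) : Set Y) ∧
    ∃ q : Submodule ℂ Y, IsClosed (q : Set Y) ∧ IsCompl (LinearMap.range (T : Y →ₗ[ℂ] Y)) q

/-- `T` is (relatively) regular: `T S T = T` for some bounded `S`. -/
def IsRegularOp (T : Y →L[ℂ] Y) : Prop := ∃ S : Y →L[ℂ] Y, T.comp (S.comp T) = T

/-- `X ⪯ Z`: `X` embeds in `Z`, i.e. there is a left invertible operator `J : X → Z`. -/
def Embeds (X Z : Type*) [SeminormedAddCommGroup X] [SeminormedAddCommGroup Z]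
    [NormedSpace ℂ X] [NormedSpace ℂ Z] : Prop :=
  ∃ (J : X →L[ℂ] Z) (L : Z →L[ℂ] X), L.comp J = ContinuousLinearMap.id ℂ X

/-- `X ⪯ₛ Z`: `X` strongly embeds in `Z`: `X ⪯ Z` and there is `J : X → Z` with
`dim (Z / R(J)) < ∞`. -/
def StrongEmbeds (X Z : Type*) [SeminormedAddCommGroup X] [SeminormedAddCommGroup Z]
    [NormedSpace ℂ X] [NormedSpace ℂ Z] : Prop :=
  Embeds X Z ∧ ∃ J : X →L[ℂ] Z, Module.rank ℂ (Z ⧸ LinearMap.range (J : X →ₗ[ℂ] Z)) < ℵ₀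

/-- `X ≺ Z`: `X` essentially embeds in `Z`: `X ⪯ Z` and `Z / R(T)` is infinite dimensional
for every `T : X → Z`. -/
def EssEmbeds (X Z : Type*) [SeminormedAddCommGroup X] [SeminormedAddCommGroup Z]
    [NormedSpace ℂ X] [NormedSpace ℂ Z] : Prop :=
  Embeds X Z ∧ ∀ T : X →L[ℂ] Z, ℵ₀ ≤ Module.rank ℂ (Z ⧸ LinearMap.range (T : X →ₗ[ℂ] Z))

/-- `X ≅ Z (u.f.d.s.)`: `X` and `Z` are isomorphic up to a finite dimensional subspace. -/
def UFDS (X Z : Type*) [SeminormedAddCommGroup X] [SeminormedAddCommGroup Z]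
    [NormedSpace ℂ X] [NormedSpace ℂ Z] : Prop :=
  ∃ (X₁ F₁ : Submodule ℂ X) (Z₁ F₂ : Submodule ℂ Z),
    IsCompl X₁ F₁ ∧ IsCompl Z₁ F₂ ∧ IsClosed (X₁ : Set X) ∧ IsClosed (F₁ : Set X) ∧
      IsClosed (Z₁ : Set Z) ∧ IsClosed (F₂ : Set Z) ∧
      FiniteDimensional ℂ F₁ ∧ FiniteDimensional ℂ F₂ ∧ Nonempty (X₁ ≃L[ℂ] Z₁)

/-- The upper triangular operator matrix `T_n^d(A)` with diagonal `D` and strictly upper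
triangular entries `A i j` (for `i < j`), acting on `X 0 ⊕ ⋯ ⊕ X (n-1)`. -/
def triUpper {n : ℕ} {X : Fin n → Type*} [∀ i, NormedAddCommGroup (X i)]
    [∀ i, NormedSpace ℂ (X i)] (D : ∀ i, X i →L[ℂ] X i)
    (A : ∀ i j, X j →L[ℂ] X i) : (∀ i, X i) →L[ℂ] (∀ i, X i) :=
  ContinuousLinearMap.pi fun i =>
    (D i).comp (ContinuousLinearMap.proj i) +
      ∑ j ∈ Finset.univ.filter (fun j => i < j), (A i j).comp (ContinuousLinearMap.proj j)


section Aux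

variable {n : ℕ} {X : Fin n → Type*} [∀ i, NormedAddCommGroup (X i)] [∀ i, NormedSpace ℂ (X i)]

lemma triUpper_apply (D : ∀ i, X i →L[ℂ] X i) (A : ∀ i j, X j →L[ℂ] X i)
    (x : ∀ i, X i) (i : Fin n) :
    triUpper D A x i = D i (x i) + ∑ j ∈ Finset.univ.filter (fun j => i < j), A i j (x j) := by
  simp [triUpper, ContinuousLinearMap.sum_apply]

lemma triUpper_sub_smul (D : ∀ i, X i →L[ℂ] X i) (A : ∀ i j, X j →L[ℂ] X i) (lam : ℂ) :
    triUpper D A - lam • 1 = triUpper (fun i => D i - lam • 1) A := by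
  ext x i
  simp [triUpper_apply]
  abel

lemma triUpper_single_eq_zero (D : ∀ i, X i →L[ℂ] X i) (A : ∀ i j, X j →L[ℂ] X i)
    (k i : Fin n) (y : X k) (h : k < i) : triUpper D A (Pi.single k y) i = 0 := by
  rw [triUpper_apply]
  rw [Pi.single_eq_of_ne (by exact Fin.ne_of_gt h), map_zero, zero_add]
  refine Finset.sum_eq_zero fun j hj => ?_
  simp only [Finset.mem_filter, Finset.mem_univ, true_and] at hj
  rw [Pi.single_eq_of_ne (by exact Fin.ne_of_gt (h.trans hj)), map_zero]

lemma triUpper_single_eq_self (D : ∀ i, X i →L[ℂ] X i) (A : ∀ i j, X j →L[ℂ] X i)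
    (k : Fin n) (y : X k) : triUpper D A (Pi.single k y) k = D k y := by
  rw [triUpper_apply, Pi.single_eq_same]
  rw [Finset.sum_eq_zero, add_zero]
  intro j hj
  simp only [Finset.mem_filter, Finset.mem_univ, true_and] at hj
  rw [Pi.single_eq_of_ne (by exact Fin.ne_of_gt hj), map_zero]

/-- The deficiency of the last diagonal entry is at most that of the matrix. -/
lemma deficiency_last_le (D : ∀ i, X i →L[ℂ] X i) (A : ∀ i j, X j →L[ℂ] X i)
    (i0 : Fin n) (hi0 : (i0 : ℕ) = n - 1) :
    Module.rank ℂ (X i0 ⧸ LinearMap.range (D i0 : X i0 →ₗ[ℂ] X i0)) ≤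
      Module.rank ℂ ((∀ i, X i) ⧸ LinearMap.range (triUpper D A : (∀ i, X i) →ₗ[ℂ] (∀ i, X i))) := by
  have hlast : ∀ x, triUpper D A x i0 = D i0 (x i0) := by
    intro x
    rw [triUpper_apply, Finset.sum_eq_zero, add_zero]
    intro j hj
    simp only [Finset.mem_filter, Finset.mem_univ, true_and] at hj
    have h1 : (i0 : ℕ) < (j : ℕ) := hj
    have h2 := j.isLt
    omega
  set R : Submodule ℂ (X i0) := LinearMap.range (D i0 : X i0 →ₗ[ℂ] X i0)
  let g : (∀ i, X i) →ₗ[ℂ] (X i0 ⧸ R) := R.mkQ ∘ₗ (LinearMap.proj i0)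
  have hrange : LinearMap.range (triUpper D A : (∀ i, X i) →ₗ[ℂ] (∀ i, X i)) ≤ LinearMap.ker g := by
    rintro _ ⟨x, rfl⟩
    simp only [LinearMap.mem_ker, g, LinearMap.comp_apply, LinearMap.proj_apply,
      ContinuousLinearMap.coe_coe, hlast x]
    exact (Submodule.Quotient.mk_eq_zero R).2 ⟨x i0, rfl⟩
  refine LinearMap.rank_le_of_surjective (Submodule.liftQ _ g hrange) ?_
  intro q
  obtain ⟨w, rfl⟩ := Submodule.mkQ_surjective R q
  refine ⟨Submodule.Quotient.mk (Pi.single i0 w), ?_⟩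
  rw [Submodule.liftQ_apply]
  show R.mkQ (Pi.single i0 w i0) = R.mkQ w
  rw [Pi.single_eq_same]

/-- If each diagonal entry has finite deficiency, so does the matrix. -/
lemma deficiency_triUpper_lt (D : ∀ i, X i →L[ℂ] X i) (A : ∀ i j, X j →L[ℂ] X i)
    (h : ∀ i, Module.rank ℂ (X i ⧸ LinearMap.range (D i : X i →ₗ[ℂ] X i)) < ℵ₀) :
    Module.rank ℂ ((∀ i, X i) ⧸ LinearMap.range (triUpper D A : (∀ i, X i) →ₗ[ℂ] (∀ i, X i))) < ℵ₀ := by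
  classical
  set T := triUpper D A with hT
  set R : ∀ i, Submodule ℂ (X i) := fun i => LinearMap.range (D i : X i →ₗ[ℂ] X i) with hR
  -- choose linear sections of the quotient maps
  have hsec : ∀ i, ∃ s : (X i ⧸ R i) →ₗ[ℂ] X i, (R i).mkQ ∘ₗ s = LinearMap.id :=
    fun i => (R i).mkQ.exists_rightInverse_of_surjective
      (LinearMap.range_eq_top.2 (Submodule.mkQ_surjective _))
  choose s hs using hsec
  -- correcting coordinates from the top down
  have key : ∀ m : ℕ, ∀ z : ∀ i, X i, ∃ x c : ∀ i, X i,
      (∀ i, c i ∈ LinearMap.range (s i)) ∧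
      ∀ i : Fin n, n - m ≤ (i : ℕ) → z i = T x i + c i := by
    intro m
    induction m with
    | zero =>
      intro z
      exact ⟨0, 0, fun i => zero_mem _, fun i hi => absurd i.isLt (by omega)⟩
    | succ m ih =>
      intro z
      obtain ⟨x, c, hc, hxc⟩ := ih z
      by_cases hm : n ≤ m
      · exact ⟨x, c, hc, fun i hi => hxc i (by omega)⟩
      · set k : Fin n := ⟨n - m - 1, by omega⟩ with hk
        set w : X k := z k - T x k - c k with hw
        set u : X k ⧸ R k := (R k).mkQ w with hu
        have hmem : w - s k u ∈ R k := by
          have : (R k).mkQ (w - s k u) = 0 := by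
            rw [map_sub]
            have : (R k).mkQ (s k u) = u :=
              congrArg (fun f => f u) (congrArg DFunLike.coe (hs k)) |>.trans rfl
            rw [this, hu, sub_self]
          exact (Submodule.Quotient.mk_eq_zero _).1 this
        obtain ⟨y, hy⟩ := hmem
        refine ⟨x + Pi.single k y, c + Pi.single k (s k u), ?_, ?_⟩
        · intro i
          by_cases hik : i = k
          · rw [hik, Pi.add_apply, Pi.single_eq_same]
            exact add_mem (hc k) ⟨u, rfl⟩
          · rw [Pi.add_apply, Pi.single_eq_of_ne hik, add_zero]
            exact hc i
        · intro i hi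
          rw [map_add]
          show z i = T x i + T (Pi.single k y) i + (c i + Pi.single k (s k u) i)
          rcases lt_or_eq_of_le hi with hlt | heq
          · have hki : k < i := by rw [Fin.lt_def]; simp only [hk]; omega
            rw [hT, triUpper_single_eq_zero D A k i y hki, add_zero,
              Pi.single_eq_of_ne (Fin.ne_of_gt hki), add_zero]
            exact hxc i (by omega)
          · have hik : i = k := Fin.ext (by simp [hk]; omega)
            rw [ContinuousLinearMap.coe_coe] at hy
            rw [hik, hT, triUpper_single_eq_self, Pi.single_eq_same, hy]
            have hwk : w = z k - T x k - c k := hw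
            rw [← hT, hwk]
            abel
  -- build the surjection from the product of quotients
  let φ : (∀ i, X i ⧸ R i) →ₗ[ℂ] ((∀ i, X i) ⧸ LinearMap.range (T : (∀ i, X i) →ₗ[ℂ] (∀ i, X i))) :=
    (LinearMap.range (T : (∀ i, X i) →ₗ[ℂ] (∀ i, X i))).mkQ ∘ₗ
      LinearMap.pi (fun i => (s i) ∘ₗ LinearMap.proj i)
  have hφ : Function.Surjective φ := by
    intro q
    obtain ⟨z, rfl⟩ := Submodule.mkQ_surjective _ q
    obtain ⟨x, c, hc, hxc⟩ := key n z
    choose u hu using hc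
    refine ⟨u, ?_⟩
    have h1 : (LinearMap.pi
        (fun i => (s i) ∘ₗ LinearMap.proj (R := ℂ) (φ := fun i => X i ⧸ R i) i)) u = c := by
      funext i
      simpa using hu i
    show (LinearMap.range (T : (∀ i, X i) →ₗ[ℂ] (∀ i, X i))).mkQ _ = (LinearMap.range (T : (∀ i, X i) →ₗ[ℂ] (∀ i, X i))).mkQ z
    rw [h1, Submodule.mkQ_apply, Submodule.mkQ_apply, Submodule.Quotient.eq]
    refine ⟨-x, ?_⟩
    have hz : z = T x + c := by
      funext i
      exact hxc i (by omega)
    rw [hz]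
    simp
  haveI : ∀ i, Module.Finite ℂ (X i ⧸ R i) := fun i => Module.rank_lt_aleph0_iff.1 (h i)
  exact lt_of_le_of_lt (LinearMap.rank_le_of_surjective φ hφ) (Module.rank_lt_aleph0 ℂ _)

end Aux

theorem stmt2 {n : ℕ} (hn : 2 ≤ n) {X : Fin n → Type*}
    [∀ i, NormedAddCommGroup (X i)] [∀ i, NormedSpace ℂ (X i)] [∀ i, CompleteSpace (X i)]
    (D : ∀ i, X i →L[ℂ] X i) (A : ∀ i j, X j →L[ℂ] X i) :
    sigmaRe (D ⟨n - 1, by omega⟩) ⊆ sigmaRe (triUpper D A) ∧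
      sigmaRe (triUpper D A) ⊆ ⋃ k : Fin n, sigmaRe (D k) := by
  constructor
  · intro lam hlam
    intro hRF
    apply hlam
    unfold RightFredholm deficiency at hRF ⊢
    rw [triUpper_sub_smul] at hRF
    have h2 := deficiency_last_le (fun i => D i - lam • 1) A ⟨n - 1, by omega⟩ rfl
    exact lt_of_le_of_lt h2 hRF
  · intro lam hlam
    by_contra hmem
    simp only [Set.mem_iUnion, not_exists] at hmem
    apply hlam
    unfold RightFredholm deficiency
    rw [triUpper_sub_smul]
    exact deficiency_triUpper_lt (fun i => D i - lam • 1) A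
      (fun i => not_not.1 (hmem i))


end OperatorMatrix
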